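/- Equality case (sharpness) of the radial logarithmic Sobolev inequality: let n ≥ 1 be an integer and τ₀ > 0, and define w : (0,∞) → ℝ by w(r) = (ω_n · e^(−r²/(4τ₀)) / (4πτ₀)^((n+1)/2))^(1/2). Then ∫₀^∞ r^n w(r)² dr = 1 and 4τ₀ · ∫₀^∞ r^n w'(r)² dr = ∫₀^∞ r^n w(r)² log(w(r)²) dr + ((n+1)/2) · log(4πτ₀) + (n+1) − log(ω_n); in particular the radial logarithmic Sobolev inequality on the half-line is sharp. -/

import Mathlib

open MeasureTheory Set

/-- The volume of the unit `n`-sphere, `ω_n = 2 π^((n+1)/2) / Γ((n+1)/2)`. -/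
noncomputable def sphereVolume (n : ℕ) : ℝ :=
  2 * Real.pi ^ (((n : ℝ) + 1) / 2) / Real.Gamma (((n : ℝ) + 1) / 2)

private lemma gaussJ {b : ℝ} (hb : 0 < b) {q : ℝ} (hq : -1 < q) :
    ∫ x in Ioi (0:ℝ), x ^ q * Real.exp (-b * x ^ 2) =
      b ^ (-(q + 1) / 2) * (1 / 2) * Real.Gamma ((q + 1) / 2) := by
  rw [← integral_rpow_mul_exp_neg_mul_rpow (by norm_num : (0:ℝ) < 2) hq hb]
  simp_rw [Real.rpow_two]

/-- **Equality case (sharpness) of the radial logarithmic Sobolev inequality**: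
for `n ≥ 1`, `τ₀ > 0` and the radial Gaussian profile
`w(r) = (ω_n e^(−r²/(4τ₀)) / (4πτ₀)^((n+1)/2))^(1/2)`, one has `∫₀^∞ rⁿ w² dr = 1` and
`4τ₀ ∫₀^∞ rⁿ w'² dr = ∫₀^∞ rⁿ w² log(w²) dr + ((n+1)/2) log(4πτ₀) + (n+1) − log ω_n`. -/
theorem radial_log_sobolev_equality_case
    (n : ℕ) (hn : 1 ≤ n) (τ₀ : ℝ) (hτ₀ : 0 < τ₀)
    (w : ℝ → ℝ)
    (hw : w = fun r : ℝ => Real.sqrt (sphereVolume n * Real.exp (-(r ^ 2) / (4 * τ₀))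
      / (4 * Real.pi * τ₀) ^ (((n : ℝ) + 1) / 2))) :
    (∫ r in Ioi (0 : ℝ), r ^ n * (w r) ^ 2) = 1 ∧
    4 * τ₀ * ∫ r in Ioi (0 : ℝ), r ^ n * (deriv w r) ^ 2
      = (∫ r in Ioi (0 : ℝ), r ^ n * (w r) ^ 2 * Real.log ((w r) ^ 2))
        + (((n : ℝ) + 1) / 2) * Real.log (4 * Real.pi * τ₀) + ((n : ℝ) + 1)
        - Real.log (sphereVolume n) := by
  have hπ : 0 < Real.pi := Real.pi_pos
  set m : ℝ := ((n : ℝ) + 1) / 2 with hm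
  have hm0 : 0 < m := by positivity
  have hΓ : 0 < Real.Gamma m := Real.Gamma_pos_of_pos hm0
  have hω : 0 < sphereVolume n := by
    rw [sphereVolume, ← hm]
    exact div_pos (by positivity) hΓ
  have h4τ : (0:ℝ) < 4 * τ₀ := by linarith
  have h4πτ : (0:ℝ) < 4 * Real.pi * τ₀ := by positivity
  set b : ℝ := (4 * τ₀)⁻¹ with hb
  have hbpos : 0 < b := by positivity
  set C : ℝ := sphereVolume n / (4 * Real.pi * τ₀) ^ m with hC
  have hCpos : 0 < C := div_pos hω (Real.rpow_pos_of_pos h4πτ m)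
  set s : ℝ := Real.sqrt C with hs
  have hs2 : s ^ 2 = C := Real.sq_sqrt hCpos.le
  -- Rewrite `w` in exponential form
  have hwalt : w = fun r : ℝ => s * Real.exp (-(b / 2) * r ^ 2) := by
    funext r
    simp only [hw]
    rw [mul_div_right_comm, ← hC, Real.sqrt_mul hCpos.le, ← Real.exp_half]
    congr 1
    rw [hb]
    field_simp
  have hesq : ∀ r : ℝ, Real.exp (-(b / 2) * r ^ 2) ^ 2 = Real.exp (-b * r ^ 2) := by
    intro r
    rw [sq, ← Real.exp_add]
    congr 1
    ring
  have hw2 : ∀ r : ℝ, (w r) ^ 2 = C * Real.exp (-b * r ^ 2) := by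
    intro r
    rw [hwalt]
    simp only
    rw [mul_pow, hs2, hesq]
  -- Derivative of w
  have hderiv : ∀ r : ℝ, deriv w r = s * Real.exp (-(b / 2) * r ^ 2) * (-b * r) := by
    intro r
    have h1 : HasDerivAt (fun x : ℝ => -(b / 2) * x ^ 2) (-(b / 2) * (2 * r)) r := by
      simpa using (hasDerivAt_pow 2 r).const_mul (-(b / 2))
    have h2 := (h1.exp).const_mul s
    rw [hwalt]
    have h3 : HasDerivAt (fun x : ℝ => s * Real.exp (-(b / 2) * x ^ 2))
        (s * Real.exp (-(b / 2) * r ^ 2) * (-b * r)) r := by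
      exact h2.congr_deriv (by ring)
    exact h3.deriv
  have hd2 : ∀ r : ℝ, (deriv w r) ^ 2 = (C * b ^ 2) * (r ^ 2 * Real.exp (-b * r ^ 2)) := by
    intro r
    rw [hderiv r, mul_pow, mul_pow, hs2, hesq]
    ring
  -- Gaussian moment integrals
  have hqn : (-1:ℝ) < (n:ℝ) := lt_of_lt_of_le (by norm_num) (Nat.cast_nonneg n)
  have hqn2 : (-1:ℝ) < (n:ℝ) + 2 := by linarith
  have hbneg : b ^ (-m) = (4 * τ₀) ^ m := by
    rw [hb, Real.inv_rpow h4τ.le, Real.rpow_neg h4τ.le, inv_inv]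
  have hbneg2 : b ^ (-(m + 1)) = (4 * τ₀) ^ m * (4 * τ₀) := by
    rw [hb, Real.inv_rpow h4τ.le, Real.rpow_neg h4τ.le, inv_inv, Real.rpow_add h4τ,
      Real.rpow_one]
  have hJn : ∫ r in Ioi (0:ℝ), r ^ ((n:ℝ)) * Real.exp (-b * r ^ 2)
      = (4 * τ₀) ^ m * (1 / 2) * Real.Gamma m := by
    rw [gaussJ hbpos hqn, show (-((n:ℝ) + 1) / 2) = -m by rw [hm]; ring,
      show (((n:ℝ) + 1) / 2) = m from hm.symm, hbneg]
  have hJn2 : ∫ r in Ioi (0:ℝ), r ^ ((n:ℝ) + 2) * Real.exp (-b * r ^ 2)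
      = (4 * τ₀) ^ m * (4 * τ₀) * (1 / 2) * (m * Real.Gamma m) := by
    rw [gaussJ hbpos hqn2, show (-(((n:ℝ) + 2) + 1) / 2) = -(m + 1) by rw [hm]; ring,
      show ((((n:ℝ) + 2) + 1) / 2) = m + 1 by rw [hm]; ring,
      Real.Gamma_add_one hm0.ne', hbneg2]
  -- Normalization identity
  have hpow : (4 * Real.pi * τ₀) ^ m = (4 * τ₀) ^ m * Real.pi ^ m := by
    rw [show 4 * Real.pi * τ₀ = (4 * τ₀) * Real.pi by ring, Real.mul_rpow h4τ.le hπ.le]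
  have hA : C * ((4 * τ₀) ^ m * (1 / 2) * Real.Gamma m) = 1 := by
    have h1 : Real.Gamma m ≠ 0 := hΓ.ne'
    have h2 : Real.pi ^ m ≠ 0 := (Real.rpow_pos_of_pos hπ m).ne'
    have h3 : (4 * τ₀) ^ m ≠ 0 := (Real.rpow_pos_of_pos h4τ m).ne'
    rw [hC, sphereVolume, ← hm, hpow]
    field_simp
  have hb1 : b * (4 * τ₀) = 1 := by
    rw [hb]
    field_simp
  -- rpow/pow conversions
  have e1 : ∀ r : ℝ, r ^ ((n:ℝ)) = r ^ n := fun r => Real.rpow_natCast r n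
  have e2 : ∀ r : ℝ, r ^ ((n:ℝ) + 2) = r ^ (n + 2) := by
    intro r
    rw [show ((n:ℝ) + 2) = ((n + 2 : ℕ) : ℝ) by push_cast; ring, Real.rpow_natCast]
  -- Part 1
  have part1 : (∫ r in Ioi (0:ℝ), r ^ n * (w r) ^ 2) = 1 := by
    have hstep : (∫ r in Ioi (0:ℝ), r ^ n * (w r) ^ 2)
        = ∫ r in Ioi (0:ℝ), C * (r ^ ((n:ℝ)) * Real.exp (-b * r ^ 2)) := by
      refine setIntegral_congr_fun measurableSet_Ioi fun r _ => ?_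
      rw [hw2 r, e1 r]
      ring
    rw [hstep, integral_const_mul, hJn, hA]
  refine ⟨part1, ?_⟩
  -- LHS of part 2
  have hL : (∫ r in Ioi (0:ℝ), r ^ n * (deriv w r) ^ 2)
      = (C * b ^ 2) * ((4 * τ₀) ^ m * (4 * τ₀) * (1 / 2) * (m * Real.Gamma m)) := by
    have hstep : (∫ r in Ioi (0:ℝ), r ^ n * (deriv w r) ^ 2)
        = ∫ r in Ioi (0:ℝ), (C * b ^ 2) * (r ^ ((n:ℝ) + 2) * Real.exp (-b * r ^ 2)) := by
      refine setIntegral_congr_fun measurableSet_Ioi fun r _ => ?_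
      rw [hd2 r, e2 r, pow_add]
      ring
    rw [hstep, integral_const_mul, hJn2]
  have hLHS : 4 * τ₀ * ∫ r in Ioi (0:ℝ), r ^ n * (deriv w r) ^ 2 = m := by
    rw [hL]
    calc 4 * τ₀ * ((C * b ^ 2) * ((4 * τ₀) ^ m * (4 * τ₀) * (1 / 2) * (m * Real.Gamma m)))
        = m * (b * (4 * τ₀)) ^ 2 * (C * ((4 * τ₀) ^ m * (1 / 2) * Real.Gamma m)) := by ring
      _ = m := by rw [hb1, hA]; ring
  -- the log integral
  have int1 : Integrable (fun r : ℝ => (C * Real.log C) * (r ^ ((n:ℝ)) * Real.exp (-b * r ^ 2)))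
      (volume.restrict (Ioi (0:ℝ))) :=
    (integrableOn_rpow_mul_exp_neg_mul_sq hbpos hqn).const_mul _
  have int2 : Integrable (fun r : ℝ => (C * b) * (r ^ ((n:ℝ) + 2) * Real.exp (-b * r ^ 2)))
      (volume.restrict (Ioi (0:ℝ))) :=
    (integrableOn_rpow_mul_exp_neg_mul_sq hbpos hqn2).const_mul _
  have hlog : (∫ r in Ioi (0:ℝ), r ^ n * (w r) ^ 2 * Real.log ((w r) ^ 2))
      = Real.log C - m := by
    have hstep : (∫ r in Ioi (0:ℝ), r ^ n * (w r) ^ 2 * Real.log ((w r) ^ 2))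
        = ∫ r in Ioi (0:ℝ),
            ((C * Real.log C) * (r ^ ((n:ℝ)) * Real.exp (-b * r ^ 2))
              - (C * b) * (r ^ ((n:ℝ) + 2) * Real.exp (-b * r ^ 2))) := by
      refine setIntegral_congr_fun measurableSet_Ioi fun r _ => ?_
      rw [hw2 r, Real.log_mul hCpos.ne' (Real.exp_pos _).ne', Real.log_exp, e1 r, e2 r,
        pow_add]
      ring
    rw [hstep, integral_sub int1 int2, integral_const_mul, integral_const_mul, hJn, hJn2]
    calc (C * Real.log C) * ((4 * τ₀) ^ m * (1 / 2) * Real.Gamma m)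
          - (C * b) * ((4 * τ₀) ^ m * (4 * τ₀) * (1 / 2) * (m * Real.Gamma m))
        = Real.log C * (C * ((4 * τ₀) ^ m * (1 / 2) * Real.Gamma m))
          - m * (b * (4 * τ₀)) * (C * ((4 * τ₀) ^ m * (1 / 2) * Real.Gamma m)) := by ring
      _ = Real.log C - m := by rw [hb1, hA]; ring
  have hlogC : Real.log C = Real.log (sphereVolume n) - m * Real.log (4 * Real.pi * τ₀) := by
    rw [hC, Real.log_div hω.ne' (Real.rpow_pos_of_pos h4πτ m).ne', Real.log_rpow h4πτ]
  have h2m : (n:ℝ) + 1 = 2 * m := by rw [hm]; ring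
  rw [hLHS, hlog, hlogC, h2m]
  ring
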